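/- (Uniqueness Lemma) Let v : S → {T,F} be a truth assignment and define P as the set of pairs ⟨α, V⟩ with α ∈ S̄ and V ∈ {T,F} such that some S-based construction sequence for α has associated truth-value sequence ending in V. Then for every α ∈ S̄ there is exactly one V ∈ {T,F} with ⟨α, V⟩ ∈ P; hence P is (the graph of) a function h : S̄ → {T,F}. -/
import Mathlib


/-- Symbols of the language of sentential logic: parentheses, the five
connectives, and sentence symbols `A_n`. -/
inductive SLSym : Type
  | lpar | rpar | neg | conj | disj | imp | iff
  | ss (n : ℕ)
deriving DecidableEq

/-- An expression is a finite sequence of symbols. -/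
abbrev Expr := List SLSym

/-- The formula-building operation `ε¬(α) = (¬α)`. -/
def eNeg (a : Expr) : Expr := SLSym.lpar :: SLSym.neg :: a ++ [SLSym.rpar]

/-- The formula-building operation `ε□(α, β) = (α □ β)` for a binary connective `□`. -/
def eBin (c : SLSym) (a b : Expr) : Expr := SLSym.lpar :: a ++ c :: b ++ [SLSym.rpar]

/-- The four binary connectives. -/
def binSyms : List SLSym := [SLSym.conj, SLSym.disj, SLSym.imp, SLSym.iff]

/-- `l` is a construction sequence: each entry is a sentence symbol, or `ε¬`
of an earlier entry, or `ε□` of two earlier entries. -/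
def IsCS (l : List Expr) : Prop :=
  ∀ i < l.length,
    (∃ n, l.getD i [] = [SLSym.ss n]) ∨
    (∃ j < i, l.getD i [] = eNeg (l.getD j [])) ∨
    (∃ c ∈ binSyms, ∃ j < i, ∃ k < i,
      l.getD i [] = eBin c (l.getD j []) (l.getD k []))

/-- A well-formed formula is the last entry of some construction sequence. -/
def IsWff (a : Expr) : Prop := ∃ l : List Expr, IsCS l ∧ l.getLast? = some a

/-- `S̄`: the set of wffs all of whose sentence symbols lie in `S`. -/
def Sbar (S : Set ℕ) : Set Expr := {a | IsWff a ∧ ∀ n, SLSym.ss n ∈ a → n ∈ S}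

/-- A construction sequence is `S`-based if every sentence symbol occurring in
any of its entries belongs to `S`. -/
def SBased (S : Set ℕ) (l : List Expr) : Prop :=
  IsCS l ∧ ∀ e ∈ l, ∀ n, SLSym.ss n ∈ e → n ∈ S

/-- Truth tables of the binary connectives (`true` = T, `false` = F). -/
def binEval : SLSym → Bool → Bool → Bool
  | SLSym.conj, a, b => a && b
  | SLSym.disj, a, b => a || b
  | SLSym.imp, a, b => !a || b
  | SLSym.iff, a, b => a == b
  | _, _, _ => false

/-- `t` is an associated sequence of truth values for the `S`-based
construction sequence `l`, determined by the truth assignment `v`. -/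
def IsAssocTV (S : Set ℕ) (v : {n : ℕ // n ∈ S} → Bool)
    (l : List Expr) (t : List Bool) : Prop :=
  t.length = l.length ∧
  ∀ i < l.length,
    (∃ n, ∃ hn : n ∈ S, l.getD i [] = [SLSym.ss n] ∧ t.getD i false = v ⟨n, hn⟩) ∨
    (∃ j < i, l.getD i [] = eNeg (l.getD j []) ∧
      t.getD i false = !(t.getD j false)) ∨
    (∃ c ∈ binSyms, ∃ j < i, ∃ k < i,
      l.getD i [] = eBin c (l.getD j []) (l.getD k []) ∧
      t.getD i false = binEval c (t.getD j false) (t.getD k false))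

/-- The set `P` of pairs `⟨α, V⟩` such that some `S`-based construction
sequence for `α` has associated truth-value sequence ending in `V`. -/
def Pset (S : Set ℕ) (v : {n : ℕ // n ∈ S} → Bool) : Set (Expr × Bool) :=
  {p | p.1 ∈ Sbar S ∧ ∃ l t, SBased S l ∧ l.getLast? = some p.1 ∧
    IsAssocTV S v l t ∧ t.getLast? = some p.2}

inductive W : Type
  | ss (n : ℕ)
  | neg (w : W)
  | bin (c : SLSym) (a b : W)

def toE : W → Expr
  | .ss n => [SLSym.ss n]
  | .neg w => eNeg (toE w)
  | .bin c a b => eBin c (toE a) (toE b)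

lemma toE_ne_nil (w : W) : toE w ≠ [] := by
  cases w <;> simp [toE, eNeg, eBin]

lemma toE_head (w : W) : (∃ m, toE w = [SLSym.ss m]) ∨ ∃ t, toE w = SLSym.lpar :: t := by
  cases w <;> simp [toE, eNeg, eBin]

lemma step_aux {m : ℕ}
    (IH : ∀ w1 w2 (r : Expr), (toE w1).length ≤ m → toE w1 = toE w2 ++ r → w1 = w2 ∧ r = [])
    (b b' : W) (r : Expr) (hb : (toE b).length ≤ m) (hb' : (toE b').length ≤ m)
    (h : toE b ++ [SLSym.rpar] = toE b' ++ (SLSym.rpar :: r)) : b = b' ∧ r = [] := by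
  rcases List.append_eq_append_iff.mp h with ⟨s, h1, h2⟩ | ⟨s, h1, h2⟩
  · have hl := congrArg List.length h2
    simp at hl
    have hs : s = [] := List.length_eq_zero_iff.mp (by omega)
    have hr : r = [] := List.length_eq_zero_iff.mp (by omega)
    subst hs hr
    simp at h1
    obtain ⟨hbe, -⟩ := IH b' b [] hb' (by simpa using h1)
    exact ⟨hbe.symm, rfl⟩
  · obtain ⟨hbe, hs⟩ := IH b b' s hb h1
    subst hs
    simp at h2
    exact ⟨hbe, h2⟩

lemma noPrefix : ∀ (n : ℕ) (w1 w2 : W) (r : Expr), (toE w1).length ≤ n →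
    toE w1 = toE w2 ++ r → w1 = w2 ∧ r = [] := by
  intro n
  induction n with
  | zero => intro w1 w2 r h _; have := toE_ne_nil w1; simp [List.length_eq_zero_iff] at h; exact absurd h this
  | succ m IH =>
    intro w1 w2 r hlen heq
    cases w1 with
    | ss n1 =>
      cases w2 with
      | ss n2 => simp [toE] at heq; exact ⟨by rw [heq.1], heq.2⟩
      | neg w => simp [toE, eNeg] at heq
      | bin c a b => rcases toE_head a with ⟨mm, hh⟩ | ⟨t, hh⟩ <;>
          simp [toE, eNeg, eBin, hh] at heq
    | neg w =>
      cases w2 with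
      | ss n2 => simp [toE, eNeg] at heq
      | bin c' a' b' =>
        rcases toE_head a' with ⟨mm, hh⟩ | ⟨t, hh⟩ <;>
          simp [toE, eNeg, eBin, hh] at heq
      | neg w' =>
        simp only [toE, eNeg, List.cons_append, List.append_assoc, List.cons.injEq,
          true_and] at heq
        simp only [List.nil_append] at heq
        have hl := congrArg List.length heq
        simp at hl
        simp [toE, eNeg] at hlen
        obtain ⟨h1, h2⟩ := step_aux IH w w' r (by omega) (by omega) heq
        exact ⟨by rw [h1], h2⟩
    | bin c a b =>
      cases w2 with
      | ss n2 => rcases toE_head a with ⟨mm, hh⟩ | ⟨t, hh⟩ <;>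
          simp [toE, eNeg, eBin, hh] at heq
      | neg w' =>
        rcases toE_head a with ⟨mm, hh⟩ | ⟨t, hh⟩ <;>
          simp [toE, eNeg, eBin, hh] at heq
      | bin c' a' b' =>
        simp only [toE, eBin, List.cons_append, List.append_assoc, List.cons.injEq,
          true_and] at heq
        simp only [List.nil_append] at heq
        simp [toE, eBin] at hlen
        rcases List.append_eq_append_iff.mp heq with ⟨s, h1, h2⟩ | ⟨s, h1, h2⟩
        · have l1 := congrArg List.length h1
          have l2 := congrArg List.length h2
          simp at l1 l2
          obtain ⟨ha, hs⟩ := IH a' a s (by omega) h1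
          subst hs ha
          simp only [List.nil_append, List.cons.injEq] at h2
          obtain ⟨hc, h2⟩ := h2
          have l3 := congrArg List.length h2
          simp at l3
          obtain ⟨hb, hr⟩ := step_aux IH b b' r (by omega) (by omega) h2
          exact ⟨by rw [hc, hb], hr⟩
        · obtain ⟨ha, hs⟩ := IH a a' s (by omega) h1
          subst hs ha
          simp only [List.nil_append, List.cons.injEq] at h2
          obtain ⟨hc, h2⟩ := h2
          have l3 := congrArg List.length h2
          simp at l3
          obtain ⟨hb, hr⟩ := step_aux IH b b' r (by omega) (by omega) h2.symm
          exact ⟨by rw [hc, hb], hr⟩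

lemma toE_inj {w1 w2 : W} (h : toE w1 = toE w2) : w1 = w2 :=
  (noPrefix (toE w1).length w1 w2 [] le_rfl (by simpa using h)).1


def Good : W → Prop
  | .ss _ => True
  | .neg w => Good w
  | .bin c a b => c ∈ binSyms ∧ Good a ∧ Good b

def evalW (u : ℕ → Bool) : W → Bool
  | .ss n => u n
  | .neg w => !(evalW u w)
  | .bin c a b => binEval c (evalW u a) (evalW u b)

lemma getLast?_getD {β : Type*} {l : List β} {a : β} (d : β) (h : l.getLast? = some a) :
    l.getD (l.length - 1) d = a := by
  rw [List.getD_eq_getElem?_getD, ← List.getLast?_eq_getElem?, h]; rfl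

lemma cs_entry {l : List Expr} (hl : IsCS l) :
    ∀ i < l.length, ∃ w, Good w ∧ l.getD i [] = toE w := by
  intro i
  induction i using Nat.strong_induction_on with
  | _ i IH =>
    intro hi
    rcases hl i hi with ⟨n, h⟩ | ⟨j, hj, h⟩ | ⟨c, hc, j, hj, k, hk, h⟩
    · exact ⟨.ss n, trivial, h⟩
    · obtain ⟨wj, gj, hwj⟩ := IH j hj (hj.trans hi)
      exact ⟨.neg wj, gj, by rw [h, hwj]; rfl⟩
    · obtain ⟨wj, gj, hwj⟩ := IH j hj (hj.trans hi)
      obtain ⟨wk, gk, hwk⟩ := IH k hk (hk.trans hi)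
      exact ⟨.bin c wj wk, ⟨hc, gj, gk⟩, by rw [h, hwj, hwk]; rfl⟩

open Classical in
noncomputable def extV (S : Set ℕ) (v : {n : ℕ // n ∈ S} → Bool) : ℕ → Bool :=
  fun n => if h : n ∈ S then v ⟨n, h⟩ else false

lemma extV_pos {S : Set ℕ} {v : {n : ℕ // n ∈ S} → Bool} {n : ℕ} (h : n ∈ S) :
    extV S v n = v ⟨n, h⟩ := dif_pos h

lemma assoc_eval {S : Set ℕ} {v : {n : ℕ // n ∈ S} → Bool} {l : List Expr} {t : List Bool}
    (hl : IsCS l) (ht : IsAssocTV S v l t) :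
    ∀ i < l.length, ∀ w, l.getD i [] = toE w →
      t.getD i false = evalW (extV S v) w := by
  intro i
  induction i using Nat.strong_induction_on with
  | _ i IH =>
    intro hi w hw
    rcases ht.2 i hi with ⟨n, hn, hln, htv⟩ | ⟨j, hj, hln, htv⟩ |
      ⟨c, hc, j, hj, k, hk, hln, htv⟩
    · have hws : w = .ss n := toE_inj (hw.symm.trans hln)
      subst hws
      rw [htv, evalW, extV_pos hn]
    · obtain ⟨wj, _, hwj⟩ := cs_entry hl j (hj.trans hi)
      have hws : w = .neg wj := toE_inj (by rw [← hw, hln, hwj]; rfl)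
      subst hws
      rw [htv, IH j hj (hj.trans hi) wj hwj, evalW]
    · obtain ⟨wj, _, hwj⟩ := cs_entry hl j (hj.trans hi)
      obtain ⟨wk, _, hwk⟩ := cs_entry hl k (hk.trans hi)
      have hws : w = .bin c wj wk := toE_inj (by rw [← hw, hln, hwj, hwk]; rfl)
      subst hws
      rw [htv, IH j hj (hj.trans hi) wj hwj, IH k hk (hk.trans hi) wk hwk, evalW]

def seqW : W → List Expr
  | .ss n => [[SLSym.ss n]]
  | .neg w => seqW w ++ [eNeg (toE w)]
  | .bin c a b => seqW a ++ seqW b ++ [eBin c (toE a) (toE b)]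

def tseqW (u : ℕ → Bool) : W → List Bool
  | .ss n => [u n]
  | .neg w => tseqW u w ++ [!(evalW u w)]
  | .bin c a b => tseqW u a ++ tseqW u b ++ [binEval c (evalW u a) (evalW u b)]

lemma seqW_length_pos (w : W) : 0 < (seqW w).length := by
  cases w <;> simp [seqW]

lemma tseqW_length (u : ℕ → Bool) (w : W) : (tseqW u w).length = (seqW w).length := by
  induction w <;> simp [tseqW, seqW, *]

lemma seqW_last (w : W) : (seqW w).getLast? = some (toE w) := by
  cases w <;> simp [seqW, toE, List.getLast?_concat]

lemma tseqW_last (u : ℕ → Bool) (w : W) : (tseqW u w).getLast? = some (evalW u w) := by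
  cases w <;> simp [tseqW, evalW, List.getLast?_concat]

lemma seqW_symbols : ∀ w : W, ∀ e ∈ seqW w, ∀ n, SLSym.ss n ∈ e → SLSym.ss n ∈ toE w := by
  intro w
  induction w with
  | ss m => intro e he n hn; simp [seqW] at he; subst he; simpa [toE] using hn
  | neg w ih =>
    intro e he n hn
    simp [seqW] at he
    rcases he with he | he
    · have := ih e he n hn
      simp [toE, eNeg]; tauto
    · subst he; simpa [toE] using hn
  | bin c a b iha ihb =>
    intro e he n hn
    simp [seqW] at he
    rcases he with he | he | he
    · have := iha e he n hn
      simp [toE, eBin]; tauto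
    · have := ihb e he n hn
      simp [toE, eBin]; tauto
    · subst he; simpa [toE] using hn

section
variable {S : Set ℕ} {v : {n : ℕ // n ∈ S} → Bool}

lemma assocTV_append {l1 l2 : List Expr} {t1 t2 : List Bool}
    (h1 : IsAssocTV S v l1 t1) (h2 : IsAssocTV S v l2 t2) :
    IsAssocTV S v (l1 ++ l2) (t1 ++ t2) := by
  obtain ⟨e1, s1⟩ := h1
  obtain ⟨e2, s2⟩ := h2
  have el : ∀ j < l1.length, (l1 ++ l2).getD j [] = l1.getD j [] := fun j hj =>
    List.getD_append _ _ _ _ hj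
  have et : ∀ j < l1.length, (t1 ++ t2).getD j false = t1.getD j false := fun j hj =>
    List.getD_append _ _ _ _ (by rw [e1]; exact hj)
  have el2 : ∀ j, (l1 ++ l2).getD (l1.length + j) [] = l2.getD j [] := by
    intro j
    rw [List.getD_append_right _ _ _ _ (by omega), Nat.add_sub_cancel_left]
  have et2 : ∀ j, (t1 ++ t2).getD (l1.length + j) false = t2.getD j false := by
    intro j
    rw [List.getD_append_right _ _ _ _ (by rw [e1]; omega), e1, Nat.add_sub_cancel_left]
  refine ⟨by simp [e1, e2], ?_⟩
  intro i hi
  simp only [List.length_append] at hi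
  by_cases hiL : i < l1.length
  · rcases s1 i hiL with ⟨n, hn, ha, hb⟩ | ⟨j, hj, ha, hb⟩ | ⟨c, hc, j, hj, k, hk, ha, hb⟩
    · exact Or.inl ⟨n, hn, by rw [el i hiL]; exact ha, by rw [et i hiL]; exact hb⟩
    · exact Or.inr (Or.inl ⟨j, hj, by rw [el i hiL, el j (hj.trans hiL)]; exact ha,
        by rw [et i hiL, et j (hj.trans hiL)]; exact hb⟩)
    · exact Or.inr (Or.inr ⟨c, hc, j, hj, k, hk,
        by rw [el i hiL, el j (hj.trans hiL), el k (hk.trans hiL)]; exact ha,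
        by rw [et i hiL, et j (hj.trans hiL), et k (hk.trans hiL)]; exact hb⟩)
  · obtain ⟨i', rfl⟩ : ∃ i', i = l1.length + i' := ⟨i - l1.length, by omega⟩
    have hi' : i' < l2.length := by omega
    rcases s2 i' hi' with ⟨n, hn, ha, hb⟩ | ⟨j, hj, ha, hb⟩ | ⟨c, hc, j, hj, k, hk, ha, hb⟩
    · exact Or.inl ⟨n, hn, by rw [el2 i']; exact ha, by rw [et2 i']; exact hb⟩
    · exact Or.inr (Or.inl ⟨l1.length + j, by omega,
        by rw [el2 i', el2 j]; exact ha, by rw [et2 i', et2 j]; exact hb⟩)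
    · exact Or.inr (Or.inr ⟨c, hc, l1.length + j, by omega, l1.length + k, by omega,
        by rw [el2 i', el2 j, el2 k]; exact ha,
        by rw [et2 i', et2 j, et2 k]; exact hb⟩)

lemma assocTV_snoc {l : List Expr} {t : List Bool} {x : Expr} {y : Bool}
    (h : IsAssocTV S v l t)
    (hnew : (∃ n, ∃ hn : n ∈ S, x = [SLSym.ss n] ∧ y = v ⟨n, hn⟩) ∨
      (∃ j < l.length, x = eNeg (l.getD j []) ∧ y = !(t.getD j false)) ∨
      (∃ c ∈ binSyms, ∃ j < l.length, ∃ k < l.length,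
        x = eBin c (l.getD j []) (l.getD k []) ∧
        y = binEval c (t.getD j false) (t.getD k false))) :
    IsAssocTV S v (l ++ [x]) (t ++ [y]) := by
  obtain ⟨e1, s1⟩ := h
  have el : ∀ j < l.length, (l ++ [x]).getD j [] = l.getD j [] := fun j hj =>
    List.getD_append _ _ _ _ hj
  have et : ∀ j < l.length, (t ++ [y]).getD j false = t.getD j false := fun j hj =>
    List.getD_append _ _ _ _ (by rw [e1]; exact hj)
  have elx : (l ++ [x]).getD l.length [] = x := by
    rw [List.getD_append_right _ _ _ _ le_rfl, Nat.sub_self]; rfl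
  have ety : (t ++ [y]).getD l.length false = y := by
    rw [List.getD_append_right _ _ _ _ (le_of_eq e1), e1, Nat.sub_self]; rfl
  refine ⟨by simp [e1], ?_⟩
  intro i hi
  simp only [List.length_append, List.length_singleton] at hi
  by_cases hiL : i < l.length
  · rcases s1 i hiL with ⟨n, hn, ha, hb⟩ | ⟨j, hj, ha, hb⟩ | ⟨c, hc, j, hj, k, hk, ha, hb⟩
    · exact Or.inl ⟨n, hn, by rw [el i hiL]; exact ha, by rw [et i hiL]; exact hb⟩
    · exact Or.inr (Or.inl ⟨j, hj, by rw [el i hiL, el j (hj.trans hiL)]; exact ha,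
        by rw [et i hiL, et j (hj.trans hiL)]; exact hb⟩)
    · exact Or.inr (Or.inr ⟨c, hc, j, hj, k, hk,
        by rw [el i hiL, el j (hj.trans hiL), el k (hk.trans hiL)]; exact ha,
        by rw [et i hiL, et j (hj.trans hiL), et k (hk.trans hiL)]; exact hb⟩)
  · have : i = l.length := by omega
    subst this
    rcases hnew with ⟨n, hn, ha, hb⟩ | ⟨j, hj, ha, hb⟩ | ⟨c, hc, j, hj, k, hk, ha, hb⟩
    · exact Or.inl ⟨n, hn, by rw [elx]; exact ha, by rw [ety]; exact hb⟩
    · exact Or.inr (Or.inl ⟨j, hj, by rw [elx, el j hj]; exact ha,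
        by rw [ety, et j hj]; exact hb⟩)
    · exact Or.inr (Or.inr ⟨c, hc, j, hj, k, hk,
        by rw [elx, el j hj, el k hk]; exact ha,
        by rw [ety, et j hj, et k hk]; exact hb⟩)

lemma seq_assoc : ∀ w : W, Good w → (∀ n, SLSym.ss n ∈ toE w → n ∈ S) →
    IsAssocTV S v (seqW w) (tseqW (extV S v) w) := by
  intro w
  induction w with
  | ss m =>
    intro _ hS
    have hm : m ∈ S := hS m (by simp [toE])
    refine ⟨rfl, ?_⟩
    intro i hi
    simp only [seqW, List.length_singleton] at hi
    have : i = 0 := by omega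
    subst this
    exact Or.inl ⟨m, hm, rfl, extV_pos hm⟩
  | neg w ih =>
    intro g hS
    have ih' := ih g (fun n hn => hS n (by simp [toE, eNeg]; tauto))
    have hL : 0 < (seqW w).length := seqW_length_pos w
    refine assocTV_snoc ih' (Or.inr (Or.inl ⟨(seqW w).length - 1, by omega, ?_, ?_⟩))
    · rw [getLast?_getD [] (seqW_last w)]
    · rw [show (seqW w).length - 1 = (tseqW (extV S v) w).length - 1 by rw [tseqW_length],
        getLast?_getD false (tseqW_last _ w)]
  | bin c a b iha ihb =>
    intro g hS
    obtain ⟨hc, ga, gb⟩ := g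
    have iha' := iha ga (fun n hn => hS n (by simp [toE, eBin]; tauto))
    have ihb' := ihb gb (fun n hn => hS n (by simp [toE, eBin]; tauto))
    have hLa : 0 < (seqW a).length := seqW_length_pos a
    have hLb : 0 < (seqW b).length := seqW_length_pos b
    have happ := assocTV_append iha' ihb'
    refine assocTV_snoc happ (Or.inr (Or.inr ⟨c, hc, (seqW a).length - 1, by simp; omega,
      (seqW a).length + ((seqW b).length - 1), by simp; omega, ?_, ?_⟩))
    · rw [List.getD_append _ _ _ _ (by omega), getLast?_getD [] (seqW_last a),
        List.getD_append_right _ _ _ _ (by omega), Nat.add_sub_cancel_left,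
        getLast?_getD [] (seqW_last b)]
    · have e1 : (tseqW (extV S v) a).length = (seqW a).length := tseqW_length _ a
      have e2 : (tseqW (extV S v) b).length = (seqW b).length := tseqW_length _ b
      rw [List.getD_append _ _ _ _ (by omega),
        show (seqW a).length - 1 = (tseqW (extV S v) a).length - 1 by rw [e1],
        getLast?_getD false (tseqW_last _ a),
        List.getD_append_right _ _ _ _ (by omega),
        show (seqW a).length + ((seqW b).length - 1) - (tseqW (extV S v) a).length
          = (tseqW (extV S v) b).length - 1 by omega,
        getLast?_getD false (tseqW_last _ b)]
end

lemma assoc_isCS {S : Set ℕ} {v : {n : ℕ // n ∈ S} → Bool} {l : List Expr} {t : List Bool}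
    (h : IsAssocTV S v l t) : IsCS l := by
  intro i hi
  rcases h.2 i hi with ⟨n, _, ha, _⟩ | ⟨j, hj, ha, _⟩ | ⟨c, hc, j, hj, k, hk, ha, _⟩
  · exact Or.inl ⟨n, ha⟩
  · exact Or.inr (Or.inl ⟨j, hj, ha⟩)
  · exact Or.inr (Or.inr ⟨c, hc, j, hj, k, hk, ha⟩)


theorem uniqueness_lemma (S : Set ℕ) (v : {n : ℕ // n ∈ S} → Bool) :
    ∀ α ∈ Sbar S, ∃! V : Bool, (α, V) ∈ Pset S v := by
  intro α hα
  obtain ⟨⟨l0, hcs0, hlast0⟩, hsym⟩ := hα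
  have hne0 : l0 ≠ [] := by rintro rfl; simp at hlast0
  have hl0 : 0 < l0.length := List.length_pos_iff.mpr hne0
  have hαe : l0.getD (l0.length - 1) [] = α := getLast?_getD [] hlast0
  obtain ⟨w, gw, hw⟩ := cs_entry hcs0 (l0.length - 1) (by omega)
  have hαw : α = toE w := hαe.symm.trans hw
  have hSw : ∀ n, SLSym.ss n ∈ toE w → n ∈ S := by rw [← hαw]; exact hsym
  have hassoc := seq_assoc (v := v) w gw hSw
  refine ⟨evalW (extV S v) w, ⟨⟨⟨l0, hcs0, hlast0⟩, hsym⟩, seqW w, tseqW (extV S v) w,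
    ⟨assoc_isCS hassoc, fun e he n hn => hSw n (seqW_symbols w e he n hn)⟩,
    by rw [seqW_last, hαw], hassoc, tseqW_last _ w⟩, ?_⟩
  intro V' hV'
  obtain ⟨-, l, t, ⟨hcs, -⟩, hlast, hat, htlast⟩ := hV'
  have hne : l ≠ [] := by rintro rfl; simp at hlast
  have hlpos : 0 < l.length := List.length_pos_iff.mpr hne
  have hαe' : l.getD (l.length - 1) [] = α := getLast?_getD [] hlast
  obtain ⟨w', -, hw'⟩ := cs_entry hcs (l.length - 1) (by omega)
  have hww' : w' = w := toE_inj (by rw [← hw', hαe', hαw])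
  have hww : l.getD (l.length - 1) [] = toE w := by rw [hw', hww']
  have hval := assoc_eval hcs hat (l.length - 1) (by omega) w hww
  have hV : t.getD (t.length - 1) false = V' := getLast?_getD false htlast
  rw [hat.1, hval] at hV
  exact hV.symm
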